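/- arXiv:1602.08068 — 7 statements merged into one kernel-verified Lean document; each statement's English description precedes it below -/
import Mathlib

section
/- For all natural numbers j and t with t ≥ 1, the sum over s from 1 to t of C(t,s)/C(j+t,s) equals t/(j+1). -/
theorem binom_ratio_sum (j t : ℕ) (ht : 1 ≤ t) :
    ∑ s ∈ Finset.Icc 1 t, (Nat.choose t s : ℚ) / (Nat.choose (j + t) s : ℚ)
      = (t : ℚ) / (j + 1) := by
  have hD : ((j + t).choose t : ℚ) ≠ 0 := by
    exact_mod_cast (Nat.choose_pos (Nat.le_add_left t j)).ne'
  have hterm : ∀ s ∈ Finset.Icc 1 t,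
      (Nat.choose t s : ℚ) / (Nat.choose (j + t) s : ℚ)
        = ((j + t - s).choose j : ℚ) / ((j + t).choose t : ℚ) := by
    intro s hs
    simp only [Finset.mem_Icc] at hs
    have hst : s ≤ t := hs.2
    have hkey : (j + t).choose t * t.choose s = (j + t).choose s * (j + t - s).choose (t - s) :=
      Nat.choose_mul hst
    have hsymm : (j + t - s).choose (t - s) = (j + t - s).choose j := by
      rw [← Nat.choose_symm (by omega : j ≤ j + t - s)]; congr 1; omega
    have hs0 : ((j + t).choose s : ℚ) ≠ 0 := by
      exact_mod_cast (Nat.choose_pos (by omega : s ≤ j + t)).ne'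
    rw [div_eq_div_iff hs0 hD]
    rw [hsymm] at hkey
    have := congrArg (fun n : ℕ => (n : ℚ)) hkey
    push_cast at this
    linarith [this]
  rw [Finset.sum_congr rfl hterm, ← Finset.sum_div]
  have hre : ∑ s ∈ Finset.Icc 1 t, ((j + t - s).choose j : ℚ)
      = ∑ m ∈ Finset.Icc j (j + t - 1), (m.choose j : ℚ) := by
    apply Finset.sum_nbij' (fun s => j + t - s) (fun m => j + t - m)
    · intro s hs; simp only [Finset.mem_Icc] at *; omega
    · intro m hm; simp only [Finset.mem_Icc] at *; omega
    · intro s hs; simp only [Finset.mem_Icc] at hs; omega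
    · intro m hm; simp only [Finset.mem_Icc] at hm; omega
    · intro s hs; rfl
  rw [hre]
  have hsum : ∑ m ∈ Finset.Icc j (j + t - 1), (m.choose j) = (j + t).choose (j + 1) := by
    rw [Nat.sum_Icc_choose]
    congr 1; omega
  have hsum' : ∑ m ∈ Finset.Icc j (j + t - 1), (m.choose j : ℚ) = ((j + t).choose (j + 1) : ℚ) := by
    exact_mod_cast congrArg (fun n : ℕ => (n : ℚ)) hsum
  rw [hsum']
  have hfin : (j + t).choose (j + 1) * (j + 1) = (j + t).choose j * t := by
    have := Nat.choose_succ_right_eq (j + t) j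
    simpa using this
  have hj1 : ((j : ℚ) + 1) ≠ 0 := by positivity
  have hDj : ((j + t).choose j : ℚ) ≠ 0 := by
    exact_mod_cast (Nat.choose_pos (Nat.le_add_right j t)).ne'
  rw [div_eq_div_iff hD hj1]
  have hsymmD : (j + t).choose t = (j + t).choose j := by
    rw [← Nat.choose_symm (Nat.le_add_right j t)]; congr 1; omega
  rw [hsymmD]
  have := congrArg (fun n : ℕ => (n : ℚ)) hfin
  push_cast at this
  linarith [this]
end

section
/- For all natural numbers j and t with t ≥ 1, the sum over s from 1 to t of s·C(t,s)/C(j+t,s) equals t(j+t+1)/((j+1)(j+2)). -/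
theorem binom_ratio_sum_weighted (j t : ℕ) (ht : 1 ≤ t) :
    ∑ s ∈ Finset.Icc 1 t, (s : ℚ) * (Nat.choose t s : ℚ) / (Nat.choose (j + t) s : ℚ)
      = (t : ℚ) * (j + t + 1) / ((j + 1) * (j + 2)) := by
  set f : ℕ → ℚ := fun s =>
    (((j : ℚ) + 1) * s + t) * ((j : ℚ) + t + 1 - s) * (Nat.choose t s : ℚ) /
      (((j : ℚ) + 1) * ((j : ℚ) + 2) * (Nat.choose (j + t) s : ℚ)) with hf
  have key : ∀ s ∈ Finset.Icc 1 t,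
      (s : ℚ) * (Nat.choose t s : ℚ) / (Nat.choose (j + t) s : ℚ) = f s - f (s + 1) := by
    intro s hs
    obtain ⟨hs1, hs2⟩ := Finset.mem_Icc.mp hs
    have hstj : s ≤ j + t := hs2.trans (Nat.le_add_left t j)
    have hb : ((Nat.choose (j + t) s : ℕ) : ℚ) ≠ 0 := by
      exact_mod_cast (Nat.choose_pos hstj).ne'
    have ha' : ((Nat.choose t (s + 1) : ℕ) : ℚ) * ((s : ℚ) + 1)
        = (Nat.choose t s : ℚ) * ((t : ℚ) - s) := by
      have := Nat.choose_succ_right_eq t s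
      have h2 : (((Nat.choose t (s + 1)) * (s + 1) : ℕ) : ℚ)
          = ((Nat.choose t s * (t - s) : ℕ) : ℚ) := congrArg (fun n : ℕ => (n : ℚ)) this
      push_cast [Nat.cast_sub hs2] at h2
      linarith [h2]
    have hb' : ((Nat.choose (j + t) (s + 1) : ℕ) : ℚ) * ((s : ℚ) + 1)
        = (Nat.choose (j + t) s : ℚ) * ((j : ℚ) + t - s) := by
      have := Nat.choose_succ_right_eq (j + t) s
      have h2 : (((Nat.choose (j + t) (s + 1)) * (s + 1) : ℕ) : ℚ)
          = ((Nat.choose (j + t) s * (j + t - s) : ℕ) : ℚ) := congrArg (fun n : ℕ => (n : ℚ)) this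
      push_cast [Nat.cast_sub hstj] at h2
      linarith [h2]
    have hj1 : ((j : ℚ) + 1) ≠ 0 := by positivity
    have hj2 : ((j : ℚ) + 2) ≠ 0 := by positivity
    by_cases hcase : s < j + t
    · have hbb' : ((Nat.choose (j + t) (s + 1) : ℕ) : ℚ) ≠ 0 := by
        exact_mod_cast (Nat.choose_pos hcase).ne'
      have hstep : f (s + 1)
          = (((j : ℚ) + 1) * ((s : ℚ) + 1) + t) * ((t : ℚ) - s) * (Nat.choose t s : ℚ) /
            (((j : ℚ) + 1) * ((j : ℚ) + 2) * (Nat.choose (j + t) s : ℚ)) := by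
        rw [hf]
        rw [div_eq_div_iff (by positivity) (by positivity)] <;>
          push_cast
        · linear_combination
            ((((j : ℚ) + 1) * ((s : ℚ) + 1) + t) * (((j : ℚ) + 1) * ((j : ℚ) + 2)) *
              ((Nat.choose (j + t) (s + 1) : ℕ) : ℚ)) * ha'
            - ((((j : ℚ) + 1) * ((s : ℚ) + 1) + t) * (((j : ℚ) + 1) * ((j : ℚ) + 2)) *
              ((Nat.choose t (s + 1) : ℕ) : ℚ)) * hb'
      rw [hstep, hf]
      field_simp
      ring
    · have hseq : s = j + t := le_antisymm hstj (not_lt.mp hcase)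
      have hj0 : j = 0 := by omega
      have hst : s = t := by omega
      subst hj0 hst
      simp only [hf, Nat.zero_add, Nat.choose_self, Nat.choose_succ_self, Nat.cast_one,
        Nat.cast_zero, Nat.cast_ofNat]
      push_cast
      ring
  rw [Finset.sum_congr rfl key]
  rw [← Finset.Ico_add_one_right_eq_Icc, Finset.sum_Ico_eq_sum_range]
  have tele : ∑ i ∈ Finset.range (t + 1 - 1), (f (1 + i) - f (1 + i + 1))
      = f 1 - f (1 + t) := by
    have := Finset.sum_range_sub' (fun i => f (1 + i)) t
    simpa [add_assoc] using this
  rw [tele]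
  have hft : f (1 + t) = 0 := by
    simp [hf, Nat.choose_succ_self, Nat.add_comm 1 t]
  rw [hft, hf]
  have hjt : ((j : ℚ) + t) ≠ 0 := by
    have : (1 : ℚ) ≤ (t : ℚ) := by exact_mod_cast ht
    positivity
  simp only [Nat.choose_one_right, Nat.cast_one, Nat.cast_add]
  push_cast
  field_simp
  ring
end

section
/- For any j ∈ {1,…,n-1} and any coalition S ⊆ N \ {j, j+1} with |S| = s: if S ∩ {1,…,j} = ∅ then v_g(S∪{j}) - v_g(S∪{j+1}) = ((n-s-1)·s/n²)·(v_j - v_{j+1}); if S ∩ {1,…,j} ≠ ∅ then v_g(S∪{j}) - v_g(S∪{j+1}) = -((n-s-1)/n²)·(v_j - v_{j+1}). -/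
open Finset

/-- The gain game: worth of a coalition `S` among `n` agents with valuations `v`. -/
noncomputable def vg (n : ℕ) (v : ℕ → ℝ) (S : Finset ℕ) : ℝ :=
  if h : S.Nonempty then
    ((n : ℝ) - S.card) / (n : ℝ) ^ 2 * ∑ i ∈ S, (S.sup' h v - v i)
  else 0

theorem adjacent_diff (n : ℕ) (v : ℕ → ℝ)
    (hv : ∀ i j, i ≤ j → v j ≤ v i)
    (j : ℕ) (hj : j ∈ Finset.Icc 1 (n - 1))
    (S : Finset ℕ) (hS : S ⊆ (Finset.Icc 1 n) \ {j, j + 1}) :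
    (S ∩ Finset.Icc 1 j = ∅ →
      vg n v (insert j S) - vg n v (insert (j + 1) S)
        = ((n : ℝ) - S.card - 1) * S.card / (n : ℝ) ^ 2 * (v j - v (j + 1))) ∧
    (S ∩ Finset.Icc 1 j ≠ ∅ →
      vg n v (insert j S) - vg n v (insert (j + 1) S)
        = -(((n : ℝ) - S.card - 1) / (n : ℝ) ^ 2) * (v j - v (j + 1))) := by
  have hmem : ∀ i ∈ S, (1 ≤ i ∧ i ≤ n) ∧ i ≠ j ∧ i ≠ j + 1 := by
    intro i hi
    have := hS hi
    simp only [Finset.mem_sdiff, Finset.mem_Icc, Finset.mem_insert,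
      Finset.mem_singleton, not_or] at this
    exact ⟨this.1, this.2⟩
  have hjS : j ∉ S := fun h => (hmem j h).2.1 rfl
  have hj1S : j + 1 ∉ S := fun h => (hmem _ h).2.2 rfl
  have hne1 : (insert j S).Nonempty := insert_nonempty _ _
  have hne2 : (insert (j + 1) S).Nonempty := insert_nonempty _ _
  have hc1 : (insert j S).card = S.card + 1 := card_insert_of_notMem hjS
  have hc2 : (insert (j + 1) S).card = S.card + 1 := card_insert_of_notMem hj1S
  have hvg1 : vg n v (insert j S)
      = ((n : ℝ) - (S.card + 1)) / (n : ℝ) ^ 2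
        * ∑ i ∈ insert j S, ((insert j S).sup' hne1 v - v i) := by
    rw [vg, dif_pos hne1, hc1]; push_cast; ring_nf
  have hvg2 : vg n v (insert (j + 1) S)
      = ((n : ℝ) - (S.card + 1)) / (n : ℝ) ^ 2
        * ∑ i ∈ insert (j + 1) S, ((insert (j + 1) S).sup' hne2 v - v i) := by
    rw [vg, dif_pos hne2, hc2]; push_cast; ring_nf
  constructor
  · intro hemp
    have hgt : ∀ i ∈ S, j < i := by
      intro i hi
      by_contra h
      push_neg at h
      have : i ∈ S ∩ Finset.Icc 1 j :=
        Finset.mem_inter.2 ⟨hi, Finset.mem_Icc.2 ⟨(hmem i hi).1.1, h⟩⟩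
      rw [hemp] at this
      exact absurd this (Finset.notMem_empty i)
    have sup1 : (insert j S).sup' hne1 v = v j := by
      refine le_antisymm (Finset.sup'_le _ _ ?_) (Finset.le_sup' v (mem_insert_self _ _))
      intro i hi
      rcases Finset.mem_insert.1 hi with rfl | hi
      · exact le_rfl
      · exact hv j i (hgt i hi).le
    have sup2 : (insert (j + 1) S).sup' hne2 v = v (j + 1) := by
      refine le_antisymm (Finset.sup'_le _ _ ?_) (Finset.le_sup' v (mem_insert_self _ _))
      intro i hi
      rcases Finset.mem_insert.1 hi with rfl | hi
      · exact le_rfl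
      · exact hv (j + 1) i (hgt i hi)
    rw [hvg1, hvg2, sup1, sup2, Finset.sum_insert hjS, Finset.sum_insert hj1S]
    have key : (∑ i ∈ S, (v j - v i)) - (∑ i ∈ S, (v (j + 1) - v i))
        = S.card * (v j - v (j + 1)) := by
      rw [← Finset.sum_sub_distrib]
      simp [Finset.sum_const, sub_sub_sub_cancel_right]
      ring
    have expand : ((n : ℝ) - (S.card + 1)) / (n : ℝ) ^ 2
          * (v j - v j + ∑ i ∈ S, (v j - v i))
        - ((n : ℝ) - (S.card + 1)) / (n : ℝ) ^ 2
          * (v (j + 1) - v (j + 1) + ∑ i ∈ S, (v (j + 1) - v i))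
        = ((n : ℝ) - (S.card + 1)) / (n : ℝ) ^ 2
          * ((∑ i ∈ S, (v j - v i)) - (∑ i ∈ S, (v (j + 1) - v i))) := by ring
    rw [expand, key]
    ring
  · intro hne
    obtain ⟨i0, hi0⟩ := Finset.nonempty_iff_ne_empty.2 hne
    have hi0S : i0 ∈ S := (Finset.mem_inter.1 hi0).1
    have hi0j : i0 ≤ j := (Finset.mem_Icc.1 (Finset.mem_inter.1 hi0).2).2
    have hSne : S.Nonempty := ⟨i0, hi0S⟩
    have hjB : v j ≤ S.sup' hSne v := le_trans (hv i0 j hi0j) (Finset.le_sup' v hi0S)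
    have hj1B : v (j + 1) ≤ S.sup' hSne v :=
      le_trans (hv j (j + 1) (Nat.le_succ j)) hjB
    have sup1 : (insert j S).sup' hne1 v = S.sup' hSne v := by
      rw [Finset.sup'_insert]
      exact sup_eq_right.2 hjB
    have sup2 : (insert (j + 1) S).sup' hne2 v = S.sup' hSne v := by
      rw [Finset.sup'_insert]
      exact sup_eq_right.2 hj1B
    rw [hvg1, hvg2, sup1, sup2, Finset.sum_insert hjS, Finset.sum_insert hj1S]
    ring
end

section
/- The marginal contribution formula: for i ∈ N and nonempty S ⊆ N \ {i} with |S| = s, v_g(S∪{i}) - v_g(S) = ((n-s-1)/n²)·max{ s(v_i - b^S), b^S - v_i } - (1/n²)·Σ_{k∈S}(b^S - v_k). -/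
open Finset

theorem marginal_contribution (n : ℕ) (v : ℕ → ℝ)
    (hv : ∀ i j, i ≤ j → v j ≤ v i)
    (i : ℕ) (hi : i ∈ Finset.Icc 1 n)
    (S : Finset ℕ) (hS : S ⊆ (Finset.Icc 1 n).erase i) (hNe : S.Nonempty) :
    vg n v (insert i S) - vg n v S
      = ((n : ℝ) - S.card - 1) / (n : ℝ) ^ 2 *
          max ((S.card : ℝ) * (v i - S.sup' hNe v)) (S.sup' hNe v - v i)
        - (1 / (n : ℝ) ^ 2) * ∑ k ∈ S, (S.sup' hNe v - v k) := by
  have hiS : i ∉ S := fun h => (Finset.mem_erase.mp (hS h)).1 rfl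
  have hcard : (insert i S).card = S.card + 1 := Finset.card_insert_of_notMem hiS
  have hNe' : (insert i S).Nonempty := Finset.insert_nonempty _ _
  set b := S.sup' hNe v with hb
  have hsup : (insert i S).sup' hNe' v = max (v i) b := by
    rw [Finset.sup'_insert]
  have hs1 : (1 : ℝ) ≤ S.card := by
    exact_mod_cast Finset.card_pos.mpr hNe
  rw [vg, vg, dif_pos hNe', dif_pos hNe, hcard]
  rcases le_or_gt b (v i) with hcase | hcase
  · have hsup' : (insert i S).sup' hNe' v = v i := by rw [hsup, max_eq_left hcase]
    have hsum : ∑ k ∈ insert i S, ((insert i S).sup' hNe' v - v k)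
        = ∑ k ∈ S, (b - v k) + S.card * (v i - b) := by
      rw [hsup', Finset.sum_insert hiS]
      have : ∀ k ∈ S, v i - v k = (b - v k) + (v i - b) := by intros; ring
      rw [Finset.sum_congr rfl this, Finset.sum_add_distrib, Finset.sum_const, nsmul_eq_mul]
      ring
    have hmax : max ((S.card : ℝ) * (v i - b)) (b - v i) = S.card * (v i - b) := by
      apply max_eq_left
      have h1 : (0:ℝ) ≤ v i - b := by linarith
      nlinarith
    rw [hsum, hmax]
    push_cast
    ring
  · have hsup' : (insert i S).sup' hNe' v = b := by rw [hsup, max_eq_right hcase.le]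
    have hsum : ∑ k ∈ insert i S, ((insert i S).sup' hNe' v - v k)
        = ∑ k ∈ S, (b - v k) + (b - v i) := by
      rw [hsup', Finset.sum_insert hiS]; ring
    have hmax : max ((S.card : ℝ) * (v i - b)) (b - v i) = b - v i := by
      apply max_eq_right
      nlinarith
    rw [hsum, hmax]
    push_cast
    ring
end

section
/- For n > 2, there is no collusion prone player: for every i ∈ N there exists j ∈ {1,…,n-1} with ψ_{ij} < 0. -/
open Finset

/-- The coefficient `c(n,j)`. -/
noncomputable def cc (n j : ℕ) : ℝ :=
  (2 * (n : ℝ) - 3 * j - (j : ℝ) ^ 2) / (2 * n * ((j : ℝ) + 1) * ((j : ℝ) + 2))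

/-- The Shapley-value coefficient matrix `ψ_{ij}`. -/
noncomputable def psi (n i j : ℕ) : ℝ :=
  if i ≤ j then ((n : ℝ) - j) * cc n j else -(j : ℝ) * cc n j

theorem no_collusion_prone (n : ℕ) (hn : 2 < n) :
    ∀ i ∈ Finset.Icc 1 n, ∃ j ∈ Finset.Icc 1 (n - 1), psi n i j < 0 := by
  intro i hi
  simp only [Finset.mem_Icc] at hi
  have hn3 : (3 : ℕ) ≤ n := hn
  have hnr : (3 : ℝ) ≤ (n : ℝ) := by exact_mod_cast hn3
  by_cases h1 : i = 1
  · -- use j = n - 1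
    refine ⟨n - 1, ?_, ?_⟩
    · simp only [Finset.mem_Icc]
      omega
    · have hle : i ≤ n - 1 := by omega
      have hcast : ((n - 1 : ℕ) : ℝ) = (n : ℝ) - 1 := by
        have : (1 : ℕ) ≤ n := by omega
        push_cast [this]; ring
      rw [psi, if_pos hle, cc, hcast]
      have hnum : 2 * (n : ℝ) - 3 * ((n : ℝ) - 1) - ((n : ℝ) - 1) ^ 2 < 0 := by nlinarith
      have hden : 0 < 2 * (n : ℝ) * (((n : ℝ) - 1) + 1) * (((n : ℝ) - 1) + 2) := by nlinarith
      have hcc : (2 * (n : ℝ) - 3 * ((n : ℝ) - 1) - ((n : ℝ) - 1) ^ 2) /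
          (2 * (n : ℝ) * (((n : ℝ) - 1) + 1) * (((n : ℝ) - 1) + 2)) < 0 :=
        div_neg_of_neg_of_pos hnum hden
      have hpos : (0 : ℝ) < (n : ℝ) - ((n : ℝ) - 1) := by linarith
      nlinarith
  · -- i ≥ 2, use j = 1
    refine ⟨1, ?_, ?_⟩
    · simp only [Finset.mem_Icc]; omega
    · have hgt : ¬ i ≤ 1 := by omega
      rw [psi, if_neg hgt, cc]
      push_cast
      have hnum : 0 < 2 * (n : ℝ) - 3 * 1 - (1 : ℝ) ^ 2 := by nlinarith
      have hden : 0 < 2 * (n : ℝ) * ((1 : ℝ) + 1) * ((1 : ℝ) + 2) := by nlinarith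
      have hcc : 0 < (2 * (n : ℝ) - 3 * 1 - (1 : ℝ) ^ 2) /
          (2 * (n : ℝ) * ((1 : ℝ) + 1) * ((1 : ℝ) + 2)) := div_pos hnum hden
      nlinarith
end

section
/- Among coalitions of fixed cardinality s ≥ 2, the coalition S_s = {1} ∪ {n+2-s, …, n} maximizes the gain game: v_g(S_s) ≥ v_g(S) for every S ⊆ N with |S| = s, and v_g(S_s) = ((n-s)/n²)·Σ_{i=n+2-s}^{n}(v_1 - v_i). -/
open Finset

/-- The maximal-gain coalition of cardinality `s`: `S_s = {1} ∪ {n+2-s, …, n}`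
(which equals `{1}` for `s = 1`). -/
def Ss (n s : ℕ) : Finset ℕ := insert 1 (Finset.Icc (n + 2 - s) n)

private lemma strictMono_add_le {m : ℕ} (f : Fin m → ℕ) (hf : StrictMono f) :
    ∀ (d : ℕ) (a b : Fin m), (a : ℕ) + d = (b : ℕ) → f a + d ≤ f b := by
  intro d
  induction d with
  | zero =>
    intro a b h
    have : a = b := Fin.ext (by omega)
    simp [this]
  | succ d ih =>
    intro a b h
    have hc : (a : ℕ) + d < m := by have := b.isLt; omega
    have h1 := ih a ⟨(a : ℕ) + d, hc⟩ rfl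
    have h2 : f ⟨(a : ℕ) + d, hc⟩ < f b := hf (by simp [Fin.lt_def]; omega)
    omega

private lemma sumA (g : ℕ → ℝ) (hg : Monotone g) (n m : ℕ) (hm : m ≤ n)
    (S : Finset ℕ) (hS : ∀ i ∈ S, i ≤ n) (hcard : S.card = m) :
    ∑ i ∈ S, g i ≤ ∑ i ∈ Finset.Icc (n + 1 - m) n, g i := by
  set e := S.orderEmbOfFin hcard with he
  have himg : Finset.univ.image ⇑e = S := by
    apply Finset.coe_injective
    rw [Finset.coe_image, Finset.coe_univ, Set.image_univ, Finset.range_orderEmbOfFin]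
  have himg2 : Finset.univ.image (fun k : Fin m => n + 1 - m + (k : ℕ))
      = Finset.Icc (n + 1 - m) n := by
    ext i
    simp only [Finset.mem_image, Finset.mem_univ, true_and, Finset.mem_Icc]
    constructor
    · rintro ⟨k, rfl⟩
      have := k.isLt; omega
    · rintro ⟨h1, h2⟩
      exact ⟨⟨i - (n + 1 - m), by omega⟩, by simp; omega⟩
  rw [← himg, ← himg2, Finset.sum_image (by intro x _ y _ h; exact e.injective h),
    Finset.sum_image (by intro x _ y _ h; exact Fin.ext (by simp only at h; omega))]
  apply Finset.sum_le_sum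
  intro k _
  apply hg
  have hmpos : 0 < m := k.pos
  have hkey := strictMono_add_le e e.strictMono (m - 1 - (k : ℕ)) k
    ⟨m - 1, by omega⟩ (by have := k.isLt; simp; omega)
  have hlast : e ⟨m - 1, by omega⟩ ≤ n := hS _ (Finset.orderEmbOfFin_mem S hcard _)
  have := k.isLt
  omega

theorem maximal_coalition (n : ℕ) (v : ℕ → ℝ)
    (hv : ∀ i j, i ≤ j → v j ≤ v i)
    (s : ℕ) (hs : 2 ≤ s) (hsn : s ≤ n) :
    (∀ S ⊆ Finset.Icc 1 n, S.card = s → vg n v S ≤ vg n v (Ss n s)) ∧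
    vg n v (Ss n s)
      = ((n : ℝ) - s) / (n : ℝ) ^ 2 * ∑ i ∈ Finset.Icc (n + 2 - s) n, (v 1 - v i) := by
  have h1notin : 1 ∉ Finset.Icc (n + 2 - s) n := by
    simp only [Finset.mem_Icc]; omega
  have hne : (Ss n s).Nonempty := ⟨1, Finset.mem_insert_self _ _⟩
  have hcardSs : (Ss n s).card = s := by
    rw [Ss, Finset.card_insert_of_notMem h1notin, Nat.card_Icc]; omega
  have hsup : (Ss n s).sup' hne v = v 1 := by
    apply le_antisymm
    · apply Finset.sup'_le
      intro i hi
      apply hv 1 i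
      rcases Finset.mem_insert.mp hi with h | h
      · omega
      · simp only [Finset.mem_Icc] at h; omega
    · exact Finset.le_sup' v (Finset.mem_insert_self _ _)
  have hval : vg n v (Ss n s)
      = ((n : ℝ) - s) / (n : ℝ) ^ 2 * ∑ i ∈ Finset.Icc (n + 2 - s) n, (v 1 - v i) := by
    rw [vg, dif_pos hne, hsup, hcardSs, Ss, Finset.sum_insert h1notin]
    ring_nf
  refine ⟨?_, hval⟩
  intro S hSsub hScard
  have hSne : S.Nonempty := Finset.card_pos.mp (by omega)
  set a0 := S.min' hSne with ha0
  have ha0mem : a0 ∈ S := S.min'_mem hSne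
  have ha0Icc := hSsub ha0mem
  simp only [Finset.mem_Icc] at ha0Icc
  have hsupS : S.sup' hSne v = v a0 := by
    apply le_antisymm
    · exact Finset.sup'_le _ _ fun i hi => hv a0 i (S.min'_le i hi)
    · exact Finset.le_sup' v ha0mem
  have hstep1 : ∑ i ∈ S, (v a0 - v i) = ∑ i ∈ S.erase a0, (v a0 - v i) := by
    rw [← Finset.add_sum_erase S _ ha0mem]
    simp
  have hstep2 : ∑ i ∈ S.erase a0, (v a0 - v i) ≤ ∑ i ∈ S.erase a0, (v 1 - v i) := by
    apply Finset.sum_le_sum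
    intro i _
    have : v a0 ≤ v 1 := hv 1 a0 ha0Icc.1
    linarith
  have hstep3 : ∑ i ∈ S.erase a0, (v 1 - v i) ≤ ∑ i ∈ Finset.Icc (n + 2 - s) n, (v 1 - v i) := by
    have heq : n + 1 - (s - 1) = n + 2 - s := by omega
    rw [← heq]
    apply sumA (fun i => v 1 - v i)
      (fun i j hij => by simp only; have := hv i j hij; linarith)
      n (s - 1) (by omega)
    · intro i hi
      have := hSsub (Finset.erase_subset _ _ hi)
      simp only [Finset.mem_Icc] at this; omega
    · rw [Finset.card_erase_of_mem ha0mem, hScard]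
  have hcoeff : (0 : ℝ) ≤ ((n : ℝ) - s) / (n : ℝ) ^ 2 := by
    apply div_nonneg
    · have : (s : ℝ) ≤ (n : ℝ) := by exact_mod_cast hsn
      linarith
    · positivity
  rw [vg, dif_pos hSne, hsupS, hScard, hval]
  apply mul_le_mul_of_nonneg_left _ hcoeff
  calc ∑ i ∈ S, (v a0 - v i) = ∑ i ∈ S.erase a0, (v a0 - v i) := hstep1
    _ ≤ ∑ i ∈ S.erase a0, (v 1 - v i) := hstep2
    _ ≤ ∑ i ∈ Finset.Icc (n + 2 - s) n, (v 1 - v i) := hstep3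
end

section
/- The per-capita increment satisfies δ(s) = [ (n+s-s²)(v_1 - v_{n+2-s}) - n·Σ_{j=n+3-s}^{n}(v_{n+2-s} - v_j) ] / (n²·s·(s-1)) for s ∈ {2,…,n}, where δ(s) = v_g(S_s)/s - v_g(S_{s-1})/(s-1). -/
open Finset

theorem percapita_increment_formula (n : ℕ) (v : ℕ → ℝ)
    (hv : ∀ i j, i ≤ j → v j ≤ v i)
    (s : ℕ) (hs : 2 ≤ s) (hsn : s ≤ n) :
    vg n v (Ss n s) / s - vg n v (Ss n (s - 1)) / ((s : ℝ) - 1)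
      = (((n : ℝ) + s - (s : ℝ) ^ 2) * (v 1 - v (n + 2 - s))
          - (n : ℝ) * ∑ j ∈ Finset.Icc (n + 3 - s) n, (v (n + 2 - s) - v j))
        / ((n : ℝ) ^ 2 * s * ((s : ℝ) - 1)) := by
  set a := n + 2 - s with ha
  have ha1 : 2 ≤ a := by omega
  have han : a ≤ n := by omega
  have ha3 : a + 1 = n + 3 - s := by omega
  have hPrev : n + 2 - (s - 1) = a + 1 := by omega
  have h1s : (1:ℕ) ∉ Finset.Icc a n := by simp [Finset.mem_Icc]; omega
  have h1p : (1:ℕ) ∉ Finset.Icc (a+1) n := by simp [Finset.mem_Icc]; omega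
  have hSp : Ss n (s-1) = insert 1 (Finset.Icc (a+1) n) := by
    unfold Ss; rw [hPrev]
  have hne : (Ss n s).Nonempty := ⟨1, by simp [Ss]⟩
  have hnep : (Ss n (s-1)).Nonempty := ⟨1, by simp [Ss]⟩
  have hsup : ∀ (S : Finset ℕ) (h : S.Nonempty), 1 ∈ S → (Ss n s).sup' hne v = v 1 := by
    intro S h h1
    apply le_antisymm
    · refine Finset.sup'_le _ _ fun i hi => hv 1 i ?_
      rcases Finset.mem_insert.mp hi with rfl | hi
      · exact le_refl 1
      · have := (Finset.mem_Icc.mp hi).1; omega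
    · exact Finset.le_sup' v (Finset.mem_insert_self 1 _)
  have hsupS : (Ss n s).sup' hne v = v 1 := hsup (Ss n s) hne (Finset.mem_insert_self 1 _)
  have hsupP : (Ss n (s-1)).sup' hnep v = v 1 := by
    apply le_antisymm
    · refine Finset.sup'_le _ _ fun i hi => hv 1 i ?_
      rw [hSp] at hi
      rcases Finset.mem_insert.mp hi with rfl | hi
      · exact le_refl 1
      · have := (Finset.mem_Icc.mp hi).1; omega
    · exact Finset.le_sup' v (Finset.mem_insert_self 1 _)
  -- cards
  have hcardS : ((Ss n s).card : ℝ) = s := by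
    have : (Ss n s).card = s := by
      rw [show Ss n s = insert 1 (Finset.Icc a n) from rfl,
        Finset.card_insert_of_notMem h1s, Nat.card_Icc]
      omega
    rw [this]
  have hcardP : ((Ss n (s-1)).card : ℝ) = (s:ℝ) - 1 := by
    have h' : (Ss n (s-1)).card = s - 1 := by
      rw [hSp, Finset.card_insert_of_notMem h1p, Nat.card_Icc]
      omega
    rw [h', Nat.cast_sub (by omega)]
    norm_num
  -- sums
  set B := ∑ i ∈ Finset.Icc (a+1) n, (v 1 - v i) with hB
  have hsplit : Finset.Icc a n = insert a (Finset.Icc (a+1) n) := by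
    ext x; simp [Finset.mem_Icc, Finset.mem_insert]; omega
  have hnotmem : a ∉ Finset.Icc (a+1) n := by simp [Finset.mem_Icc]
  have hsumS : ∑ i ∈ Ss n s, ((Ss n s).sup' hne v - v i) = (v 1 - v a) + B := by
    rw [hsupS, show Ss n s = insert 1 (Finset.Icc a n) from rfl,
      Finset.sum_insert h1s, hsplit, Finset.sum_insert hnotmem]
    ring
  have hsumP : ∑ i ∈ Ss n (s-1), ((Ss n (s-1)).sup' hnep v - v i) = B := by
    rw [hsupP, hSp, Finset.sum_insert h1p]
    ring
  have hsumR : ∑ j ∈ Finset.Icc (n + 3 - s) n, (v a - v j)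
      = ((s:ℝ) - 2) * (v a - v 1) + B := by
    rw [← ha3]
    have : ∀ j ∈ Finset.Icc (a+1) n, v a - v j = (v a - v 1) + (v 1 - v j) := by
      intro j _; ring
    have hcast : ((n + 1 - (a+1) : ℕ) : ℝ) = (s:ℝ) - 2 := by
      rw [show n + 1 - (a+1) = s - 2 by omega, Nat.cast_sub (by omega)]
      norm_num
    rw [Finset.sum_congr rfl this, Finset.sum_add_distrib, Finset.sum_const, Nat.card_Icc,
      nsmul_eq_mul, hcast]
  rw [vg, vg, dif_pos hne, dif_pos hnep, hsumS, hsumP, hsumR, hcardS, hcardP]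
  have hn0 : (n:ℝ) ≠ 0 := Nat.cast_ne_zero.mpr (by omega)
  have hs0 : (s:ℝ) ≠ 0 := Nat.cast_ne_zero.mpr (by omega)
  have hs1 : (s:ℝ) - 1 ≠ 0 := by
    have : (2:ℝ) ≤ (s:ℝ) := by exact_mod_cast hs
    intro h; linarith [sub_eq_zero.mp h]
  field_simp
  ring
end
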